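/- arXiv:1812.06586 — 2 statements merged into one kernel-verified Lean document; each statement's English description precedes it below -/
import Mathlib

section
/- Let f ∈ H²(T) with ‖f‖₂ = 1. Then there exist unit-norm functions f₁, f₂ ∈ H²(T) such that |f|² = (|f₁|² + |f₂|²)/2 a.e. on T and |f₁| ≠ |f₂| on a set of positive measure. -/
open MeasureTheory Complex Filter Set Metric
open scoped Real ENNReal ComplexConjugate

noncomputable section

instance : Fact (0 < 2 * Real.pi) := ⟨by positivity⟩

/-- The unit circle, realized as `ℝ / 2πℤ`. -/
abbrev 𝕋 := AddCircle (2 * Real.pi)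

/-- The normalized Lebesgue (Haar) measure on the circle. -/
abbrev m : Measure 𝕋 := AddCircle.haarAddCircle

/-- The identity coordinate `z = e^{iθ}` on the circle. -/
def bz : 𝕋 → ℂ := fun x => fourier 1 x

/-- `F` belongs to the Hardy class `H^p` of the open unit disk:
holomorphic with uniformly bounded `p`-means on circles (bounded, if `p = ∞`). -/
def HpDisk (p : ℝ≥0∞) (F : ℂ → ℂ) : Prop :=
  DifferentiableOn ℂ F (ball (0:ℂ) 1) ∧
    if p = ∞ then ∃ C : ℝ, ∀ w ∈ ball (0:ℂ) 1, ‖F w‖ ≤ C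
    else ∃ C : ℝ, ∀ r ∈ Ico (0:ℝ) 1, (∫ x : 𝕋, ‖F ((r : ℂ) * bz x)‖ ^ p.toReal ∂m) ≤ C

/-- `f : 𝕋 → ℂ` is the a.e. radial boundary function of `F : ℂ → ℂ`. -/
def IsBoundary (F : ℂ → ℂ) (f : 𝕋 → ℂ) : Prop :=
  ∀ᵐ x ∂m, Tendsto (fun r : ℝ => F ((r : ℂ) * bz x)) (nhdsWithin 1 (Iio 1)) (nhds (f x))

/-- `f` belongs to the Hardy space `H^p(𝕋)`: it is the boundary function of some
disk function of class `H^p`. -/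
def MemHp (p : ℝ≥0∞) (f : 𝕋 → ℂ) : Prop :=
  ∃ F : ℂ → ℂ, HpDisk p F ∧ IsBoundary F f

/-- `f` belongs to the kernel `K_p(φ)` of the Toeplitz operator `T_φ`:
`f ∈ H^p` and the companion function `conj (z φ f)` is in `H^p`. -/
def MemKp (p : ℝ≥0∞) (φ f : 𝕋 → ℂ) : Prop :=
  MemHp p f ∧ MemHp p (fun x => conj (bz x * φ x * f x))

/-- The set `V_φ = {|f|² : f ∈ K₂(φ), 0 < ‖f‖₂ ≤ 1}` (of a.e.-defined functions). -/
def Vphi (φ : 𝕋 → ℂ) : Set (𝕋 → ℝ) :=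
  {g | ∃ f : 𝕋 → ℂ, MemKp 2 φ f ∧ 0 < eLpNorm f 2 m ∧ eLpNorm f 2 m ≤ 1 ∧
        ∀ᵐ x ∂m, g x = ‖f x‖ ^ 2}

/-- `g` is an extreme point of `V_φ` (in the a.e. sense). -/
def IsExtremeVphi (φ : 𝕋 → ℂ) (g : 𝕋 → ℝ) : Prop :=
  g ∈ Vphi φ ∧ ∀ g₁ ∈ Vphi φ, ∀ g₂ ∈ Vphi φ,
    (∀ᵐ x ∂m, g x = (g₁ x + g₂ x) / 2) → (g₁ =ᵐ[m] g ∧ g₂ =ᵐ[m] g)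

/-- The outer function on the disk with boundary modulus `w`, given by the
Herglotz-type integral formula. -/
def OuterOf (w : 𝕋 → ℝ) : ℂ → ℂ :=
  fun ζ => Complex.exp (∫ x : 𝕋, ((bz x + ζ) / (bz x - ζ)) * (Real.log (w x) : ℂ) ∂m)

/-- `F : ℂ → ℂ` is an outer function: a unimodular constant times `OuterOf w`
for some weight `w ≥ 0` with `log w ∈ L¹`. -/
def IsOuter (F : ℂ → ℂ) : Prop :=
  ∃ (c : ℂ) (w : 𝕋 → ℝ), ‖c‖ = 1 ∧ (∀ᵐ x ∂m, 0 ≤ w x) ∧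
    Integrable (fun x => Real.log (w x)) m ∧
    ∀ ζ ∈ ball (0:ℂ) 1, F ζ = c * OuterOf w ζ

/-- A boundary function `f ∈ H^p(𝕋)` is outer. -/
def IsOuterBnd (p : ℝ≥0∞) (f : 𝕋 → ℂ) : Prop :=
  ∃ F : ℂ → ℂ, HpDisk p F ∧ IsOuter F ∧ IsBoundary F f

/-- `F` is an inner function: holomorphic and bounded by `1` on the disk,
with unimodular boundary values a.e. -/
def IsInner (F : ℂ → ℂ) : Prop :=
  DifferentiableOn ℂ F (ball (0:ℂ) 1) ∧ (∀ w ∈ ball (0:ℂ) 1, ‖F w‖ ≤ 1) ∧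
    ∃ f : 𝕋 → ℂ, IsBoundary F f ∧ ∀ᵐ x ∂m, ‖f x‖ = 1

/-- The inner function `J` divides the inner function `I`. -/
def InnerDivides (J I : ℂ → ℂ) : Prop :=
  ∃ K : ℂ → ℂ, IsInner K ∧ ∀ ζ ∈ ball (0:ℂ) 1, I ζ = J ζ * K ζ

/-- `F` belongs to the Smirnov class `N⁺`: a quotient of an `H^∞` function by an
outer `H^∞` function. -/
def MemNplus (F : ℂ → ℂ) : Prop :=
  ∃ G H : ℂ → ℂ, HpDisk ∞ G ∧ HpDisk ∞ H ∧ IsOuter H ∧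
    ∀ ζ ∈ ball (0:ℂ) 1, F ζ * H ζ = G ζ

-- AUX LEMMAS --
lemma norm_bz (x : 𝕋) : ‖bz x‖ = 1 := by
  simp [bz, fourier_apply, Circle.norm_coe]

lemma continuous_bz : Continuous bz := (fourier 1).continuous

lemma injective_bz : Function.Injective bz := by
  intro x y h
  simp only [bz, fourier_one] at h
  exact AddCircle.injective_toCircle (by positivity) (Circle.coe_injective h)

lemma m_singleton_zero (x : 𝕋) : m {x} = 0 := by
  have h : (volume : Measure 𝕋) {x} = 0 := by
    rw [← Metric.closedBall_zero, AddCircle.volume_closedBall]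
    simp [min_eq_right, Real.pi_pos.le]
  rw [AddCircle.volume_eq_smul_haarAddCircle, Measure.smul_apply, smul_eq_mul] at h
  rcases mul_eq_zero.1 h with h' | h'
  · exact absurd h' (by simp [ENNReal.ofReal_eq_zero, not_le]; positivity)
  · exact h'

instance : NullSingletonClass (m) := ⟨m_singleton_zero⟩
lemma normsq_one_add (a z : ℂ) (hz : ‖z‖ = 1) :
    ‖1 + a*z‖^2 = 1 + ‖a‖^2 + 2*(a*z).re := by
  have hz2 : z.re*z.re + z.im*z.im = 1 := by
    have h : Complex.normSq z = 1 := by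
      rw [← Complex.sq_norm, hz]; norm_num
    simpa [Complex.normSq_apply] using h
  have h1 : ‖1 + a*z‖^2 = Complex.normSq (1 + a*z) := by
    rw [Complex.sq_norm]
  have h2 : ‖a‖^2 = Complex.normSq a := by
    rw [Complex.sq_norm]
  rw [h1, h2]
  simp only [Complex.normSq_apply, Complex.add_re, Complex.add_im, Complex.one_re,
    Complex.one_im, Complex.mul_re, Complex.mul_im]
  nlinarith [hz2]

lemma normsq_conj_sub (a z : ℂ) (hz : ‖z‖ = 1) :
    ‖conj a - z‖^2 = 1 + ‖a‖^2 - 2*(a*z).re := by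
  have hz2 : z.re*z.re + z.im*z.im = 1 := by
    have h : Complex.normSq z = 1 := by
      rw [← Complex.sq_norm, hz]; norm_num
    simpa [Complex.normSq_apply] using h
  have h1 : ‖conj a - z‖^2 = Complex.normSq (conj a - z) := by
    rw [Complex.sq_norm]
  have h2 : ‖a‖^2 = Complex.normSq a := by
    rw [Complex.sq_norm]
  rw [h1, h2]
  simp only [Complex.normSq_apply, Complex.sub_re, Complex.sub_im, Complex.conj_re,
    Complex.conj_im, Complex.mul_re, Complex.mul_im]
  nlinarith [hz2]

lemma re_zero_finite {a : ℂ} (ha : a ≠ 0) : {x : 𝕋 | (a * bz x).re = 0}.Finite := by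
  have hsub : {x : 𝕋 | (a * bz x).re = 0} ⊆
      bz ⁻¹' {Complex.I * (‖a‖:ℂ)/a, -(Complex.I * (‖a‖:ℂ)/a)} := by
    intro x hx
    have hre : (a * bz x).re = 0 := hx
    have hsq : (a * bz x).im^2 = ‖a‖^2 := by
      have h1 : Complex.normSq (a * bz x) = ‖a‖^2 := by
        rw [Complex.normSq_mul]
        have : Complex.normSq (bz x) = 1 := by
          rw [← Complex.sq_norm, norm_bz]; norm_num
        rw [this, ← Complex.sq_norm, mul_one]
      rw [← h1]; simp [Complex.normSq_apply, hre]; ring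
    have him : (a * bz x).im = ‖a‖ ∨ (a * bz x).im = -‖a‖ := sq_eq_sq_iff_eq_or_eq_neg.1 hsq
    have hueq : a * bz x = Complex.I * ((a * bz x).im : ℂ) := by
      apply Complex.ext <;> simp [hre]
    have hz : bz x = Complex.I * ((a * bz x).im : ℂ) / a := by
      rw [← hueq]; field_simp
    rcases him with h | h
    · left; rw [hz, h]
    · right
      show bz x ∈ {-(Complex.I * (‖a‖:ℂ)/a)}
      rw [Set.mem_singleton_iff, hz, h]
      push_cast
      ring
  exact Set.Finite.subset (Set.Finite.preimage injective_bz.injOn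
    ((Set.finite_singleton _).insert _)) hsub
set_option maxHeartbeats 1000000 in
lemma memHp_mul_aux {f : 𝕋 → ℂ} {F : ℂ → ℂ} {C : ℝ}
    (hFd : DifferentiableOn ℂ F (ball (0:ℂ) 1))
    (hC : ∀ r ∈ Ico (0:ℝ) 1, (∫ x : 𝕋, ‖F ((r : ℂ) * bz x)‖ ^ (2:ℝ≥0∞).toReal ∂m) ≤ C)
    (hFb : IsBoundary F f) (G : ℂ → ℂ) (hG : Differentiable ℂ G) (K : ℝ)
    (hK : ∀ w : ℂ, ‖w‖ ≤ 1 → ‖G w‖ ≤ K) :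
    MemHp 2 (fun x => f x * G (bz x)) := by
  set t : ℝ := (2:ℝ≥0∞).toReal with ht
  have ht0 : 0 ≤ t := ENNReal.toReal_nonneg
  have hK0 : 0 ≤ K := le_trans (norm_nonneg _) (hK 0 (by simp))
  refine ⟨fun ζ => F ζ * G ζ, ⟨hFd.mul hG.differentiableOn, ?_⟩, ?_⟩
  · rw [if_neg (by norm_num : (2:ℝ≥0∞) ≠ ⊤)]
    refine ⟨K ^ t * C, fun r hr => ?_⟩
    have hmem : ∀ x : 𝕋, (r : ℂ) * bz x ∈ ball (0:ℂ) 1 := by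
      intro x
      rw [mem_ball_zero_iff, norm_mul, norm_bz, mul_one, Complex.norm_real,
        Real.norm_eq_abs, _root_.abs_of_nonneg hr.1]
      exact hr.2
    have hcFr : Continuous fun x : 𝕋 => F ((r:ℂ)*bz x) :=
      hFd.continuousOn.comp_continuous
        (continuous_const.mul continuous_bz) hmem
    have hcGr : Continuous fun x : 𝕋 => G ((r:ℂ)*bz x) :=
      hG.continuous.comp (continuous_const.mul continuous_bz)
    have hint1 : Integrable (fun x : 𝕋 => ‖F ((r:ℂ)*bz x)‖ ^ t) m :=
      (hcFr.norm.rpow_const (fun x => Or.inr ht0)).integrable_of_hasCompactSupport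
        (HasCompactSupport.of_compactSpace _)
    have hint2 : Integrable (fun x : 𝕋 => ‖F ((r:ℂ)*bz x) * G ((r:ℂ)*bz x)‖ ^ t) m :=
      ((hcFr.mul hcGr).norm.rpow_const (fun x => Or.inr ht0)).integrable_of_hasCompactSupport
        (HasCompactSupport.of_compactSpace _)
    have hpt : ∀ x : 𝕋, ‖F ((r:ℂ)*bz x) * G ((r:ℂ)*bz x)‖ ^ t
        ≤ K ^ t * ‖F ((r:ℂ)*bz x)‖ ^ t := by
      intro x
      rw [norm_mul, ← Real.mul_rpow hK0 (norm_nonneg _)]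
      apply Real.rpow_le_rpow (by positivity) _ ht0
      have hlt : ‖(r:ℂ)*bz x‖ < 1 := mem_ball_zero_iff.mp (hmem x)
      have h1 : ‖G ((r:ℂ)*bz x)‖ ≤ K := hK ((r:ℂ)*bz x) hlt.le
      nlinarith [norm_nonneg (F ((r:ℂ)*bz x)), norm_nonneg (G ((r:ℂ)*bz x))]
    calc (∫ x : 𝕋, ‖F ((r:ℂ)*bz x) * G ((r:ℂ)*bz x)‖ ^ t ∂m)
        ≤ ∫ x : 𝕋, K ^ t * ‖F ((r:ℂ)*bz x)‖ ^ t ∂m :=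
          integral_mono hint2 (hint1.const_mul _) hpt
      _ = K ^ t * ∫ x : 𝕋, ‖F ((r:ℂ)*bz x)‖ ^ t ∂m := integral_const_mul _ _
      _ ≤ K ^ t * C := mul_le_mul_of_nonneg_left (hC r hr) (by positivity)
  · filter_upwards [hFb] with x hx
    have hGt : Tendsto (fun r : ℝ => G ((r:ℂ) * bz x)) (nhdsWithin 1 (Iio 1))
        (nhds (G (bz x))) := by
      have := (hG.continuous.comp
        (Complex.continuous_ofReal.mul (continuous_const : Continuous fun _ : ℝ => bz x))).tendsto 1
      simp only [Function.comp, Pi.mul_apply, Complex.ofReal_one, one_mul] at this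
      exact this.mono_left nhdsWithin_le_nhds
    exact hx.mul hGt
lemma aesm_of_boundary {F : ℂ → ℂ} {f : 𝕋 → ℂ}
    (hFd : DifferentiableOn ℂ F (ball (0:ℂ) 1)) (hFb : IsBoundary F f) :
    AEStronglyMeasurable f m := by
  set rn : ℕ → ℝ := fun n => 1 - 1/(n+1) with hrn
  have hrange : ∀ n : ℕ, rn n ∈ Ico (0:ℝ) 1 := by
    intro n
    constructor
    · have h1 : 1/((n:ℝ)+1) ≤ 1 := by
        rw [div_le_one (by positivity)]; linarith [Nat.cast_nonneg (α := ℝ) n]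
      simp only [hrn]; linarith
    · simp only [hrn]; have : 0 < 1/((n:ℝ)+1) := by positivity
      linarith
  have hrt : Tendsto rn atTop (nhdsWithin 1 (Iio 1)) := by
    apply tendsto_nhdsWithin_of_tendsto_nhds_of_eventually_within
    · have h0 : Tendsto (fun n : ℕ => 1/((n:ℝ)+1)) atTop (nhds 0) :=
        tendsto_one_div_add_atTop_nhds_zero_nat
      have := (tendsto_const_nhds (x := (1:ℝ)) (f := atTop)).sub h0
      simpa [hrn, one_div] using this
    · exact Eventually.of_forall fun n => (hrange n).2
  refine aestronglyMeasurable_of_tendsto_ae atTop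
    (f := fun n x => F ((rn n : ℂ) * bz x)) (fun n => ?_) ?_
  · refine (hFd.continuousOn.comp_continuous
      (continuous_const.mul continuous_bz) fun x => ?_).aestronglyMeasurable
    rw [mem_ball_zero_iff, Pi.mul_apply, norm_mul, norm_bz, mul_one, Complex.norm_real,
      Real.norm_eq_abs, _root_.abs_of_nonneg (hrange n).1]
    exact (hrange n).2
  · filter_upwards [hFb] with x hx using hx.comp hrt
set_option maxHeartbeats 1000000 in
/-- Every unit-norm `f ∈ H²` admits a nontrivial decomposition
`|f|² = (|f₁|² + |f₂|²)/2` with unit-norm `f₁, f₂ ∈ H²` and `|f₁| ≠ |f₂|` on a set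
of positive measure. -/
theorem stmt1 (f : 𝕋 → ℂ) (hf : MemHp 2 f) (hnorm : eLpNorm f 2 m = 1) :
    ∃ f₁ f₂ : 𝕋 → ℂ, MemHp 2 f₁ ∧ MemHp 2 f₂ ∧
      eLpNorm f₁ 2 m = 1 ∧ eLpNorm f₂ 2 m = 1 ∧
      (∀ᵐ x ∂m, ‖f x‖ ^ 2 = (‖f₁ x‖ ^ 2 + ‖f₂ x‖ ^ 2) / 2) ∧
      0 < m {x | ‖f₁ x‖ ≠ ‖f₂ x‖} := by
  obtain ⟨F, ⟨hFd, hFi⟩, hFb⟩ := hf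
  rw [if_neg (by norm_num : (2:ℝ≥0∞) ≠ ⊤)] at hFi
  obtain ⟨C, hC⟩ := hFi
  have hfm : AEStronglyMeasurable f m := aesm_of_boundary hFd hFb
  have hf2 : MemLp f 2 m := ⟨hfm, by rw [hnorm]; exact ENNReal.one_lt_top⟩
  have htR : ((2:ℝ≥0∞)).toReal = ((2:ℕ):ℝ) := by norm_num
  have hint2 : Integrable (fun x => ‖f x‖^2) m := by
    have h := hf2.integrable_norm_rpow (by norm_num) (by norm_num)
    rw [htR] at h
    simpa [Real.rpow_natCast] using h
  have hIf : ∫ x, ‖f x‖^2 ∂m = 1 := by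
    have h := hf2.eLpNorm_eq_integral_rpow_norm (by norm_num) (by norm_num)
    rw [hnorm, htR] at h
    simp_rw [Real.rpow_natCast] at h
    have h2 : ((∫ x, ‖f x‖^2 ∂m) ^ (((2:ℕ):ℝ))⁻¹) = 1 := by
      have := (ENNReal.ofReal_eq_one).1 h.symm
      exact this
    have hnn : 0 ≤ ∫ x, ‖f x‖^2 ∂m := integral_nonneg fun x => by positivity
    have h3 : ((∫ x, ‖f x‖^2 ∂m) ^ (((2:ℕ):ℝ))⁻¹) ^ (((2:ℕ):ℝ)) = 1 := by
      rw [h2, Real.one_rpow]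
    rw [← Real.rpow_mul hnn] at h3
    norm_num at h3
    exact h3
  set c : ℂ := ∫ x, ((‖f x‖^2 : ℝ) : ℂ) * bz x ∂m with hcdef
  have hintc : Integrable (fun x => ((‖f x‖^2:ℝ):ℂ) * bz x) m := by
    have h1 : Integrable (fun x => ((‖f x‖^2:ℝ):ℂ)) m := hint2.ofReal
    have h2 := h1.bdd_mul (f := bz) continuous_bz.aestronglyMeasurable
      (c := 1) (Eventually.of_forall fun x => le_of_eq (norm_bz x))
    exact h2.congr (Eventually.of_forall fun x => mul_comm _ _)
  set a : ℂ := if c = 0 then 1 else Complex.I * conj c with hadef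
  have ha0 : a ≠ 0 := by
    rw [hadef]; split_ifs with h
    · exact one_ne_zero
    · exact mul_ne_zero Complex.I_ne_zero (by simpa using h)
  have hacre : (a * c).re = 0 := by
    rw [hadef]; split_ifs with h
    · simp [h]
    · have he : Complex.I * conj c * c = Complex.I * (Complex.normSq c : ℂ) := by
        rw [mul_assoc, mul_comm (conj c) c, Complex.mul_conj]
      rw [he]
      simp [Complex.mul_re]
  set s : ℝ := Real.sqrt (1 + ‖a‖^2) with hsdef
  have hs0 : 0 < s := Real.sqrt_pos.2 (by positivity)
  have hs2 : s^2 = 1 + ‖a‖^2 := Real.sq_sqrt (by positivity)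
  set G₁ : ℂ → ℂ := fun ζ => (1 + a * ζ)/(s:ℂ) with hG₁def
  set G₂ : ℂ → ℂ := fun ζ => (conj a - ζ)/(s:ℂ) with hG₂def
  set f₁ : 𝕋 → ℂ := fun x => f x * G₁ (bz x) with hf₁def
  set f₂ : 𝕋 → ℂ := fun x => f x * G₂ (bz x) with hf₂def
  have hsnorm : ‖((s:ℝ):ℂ)‖^2 = s^2 := by
    rw [Complex.norm_real, Real.norm_eq_abs, _root_.sq_abs]
  have hn1 : ∀ x, ‖f₁ x‖^2 = ‖f x‖^2 * ((1 + ‖a‖^2 + 2*(a*bz x).re)/s^2) := by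
    intro x
    rw [hf₁def]
    simp only [hG₁def]
    rw [norm_mul, mul_pow, norm_div, div_pow, normsq_one_add a (bz x) (norm_bz x), hsnorm]
  have hn2 : ∀ x, ‖f₂ x‖^2 = ‖f x‖^2 * ((1 + ‖a‖^2 - 2*(a*bz x).re)/s^2) := by
    intro x
    rw [hf₂def]
    simp only [hG₂def]
    rw [norm_mul, mul_pow, norm_div, div_pow, normsq_conj_sub a (bz x) (norm_bz x), hsnorm]
  -- membership in H^2
  have hG₁diff : Differentiable ℂ G₁ := by
    rw [hG₁def]
    exact (differentiable_const _ |>.add ((differentiable_const _).mul differentiable_id)).div_const _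
  have hG₂diff : Differentiable ℂ G₂ := by
    rw [hG₂def]
    exact ((differentiable_const _).sub differentiable_id).div_const _
  have hG₁bd : ∀ w : ℂ, ‖w‖ ≤ 1 → ‖G₁ w‖ ≤ (1 + ‖a‖)/s := by
    intro w hw
    rw [hG₁def]
    simp only
    rw [norm_div, Complex.norm_real, Real.norm_eq_abs, _root_.abs_of_pos hs0]
    gcongr
    calc ‖1 + a * w‖ ≤ ‖(1:ℂ)‖ + ‖a * w‖ := norm_add_le _ _
      _ ≤ 1 + ‖a‖ := by
          rw [norm_one, norm_mul]
          have : ‖a‖ * ‖w‖ ≤ ‖a‖ * 1 := mul_le_mul_of_nonneg_left hw (norm_nonneg _)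
          linarith
  have hG₂bd : ∀ w : ℂ, ‖w‖ ≤ 1 → ‖G₂ w‖ ≤ (1 + ‖a‖)/s := by
    intro w hw
    rw [hG₂def]
    simp only
    rw [norm_div, Complex.norm_real, Real.norm_eq_abs, _root_.abs_of_pos hs0]
    gcongr
    calc ‖conj a - w‖ ≤ ‖conj a‖ + ‖w‖ := norm_sub_le _ _
      _ ≤ 1 + ‖a‖ := by rw [RCLike.norm_conj]; linarith
  have hHp1 : MemHp 2 f₁ := memHp_mul_aux hFd hC hFb G₁ hG₁diff _ hG₁bd
  have hHp2 : MemHp 2 f₂ := memHp_mul_aux hFd hC hFb G₂ hG₂diff _ hG₂bd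
  -- integral identities
  have hre_int : ∫ x, ‖f x‖^2 * (a * bz x).re ∂m = (a*c).re := by
    have h1 : ∀ x : 𝕋, ‖f x‖^2 * (a * bz x).re
        = (a * (((‖f x‖^2:ℝ):ℂ) * bz x)).re := by
      intro x
      rw [show a * (((‖f x‖^2:ℝ):ℂ) * bz x) = ((‖f x‖^2:ℝ):ℂ) * (a * bz x) by ring,
        Complex.re_ofReal_mul]
    simp_rw [h1]
    have h2 := integral_re (hintc.const_mul a)
    simp only [RCLike.re_to_complex] at h2
    rw [h2, integral_const_mul]
  have hintre : Integrable (fun x => ‖f x‖^2 * (a*bz x).re) m := by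
    have h := (hintc.const_mul a).re
    simp only [RCLike.re_to_complex] at h
    refine h.congr (Eventually.of_forall fun x => ?_)
    show (a * (((‖f x‖^2:ℝ):ℂ) * bz x)).re = ‖f x‖^2 * (a * bz x).re
    rw [show a * (((‖f x‖^2:ℝ):ℂ) * bz x) = ((‖f x‖^2:ℝ):ℂ) * (a * bz x) by ring,
      Complex.re_ofReal_mul]
  have hI1 : ∫ x, ‖f₁ x‖^2 ∂m = 1 := by
    have e1 : (fun x => ‖f₁ x‖^2)
        = fun x => (‖f x‖^2*(1+‖a‖^2) + 2*(‖f x‖^2*(a*bz x).re))/s^2 := by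
      funext x; rw [hn1 x]; ring
    rw [e1, integral_div, integral_add (hint2.mul_const _) (hintre.const_mul 2),
      integral_mul_const, integral_const_mul, hIf, hre_int, hacre]
    rw [← hs2]
    field_simp
    ring
  have hI2 : ∫ x, ‖f₂ x‖^2 ∂m = 1 := by
    have e1 : (fun x => ‖f₂ x‖^2)
        = fun x => (‖f x‖^2*(1+‖a‖^2) - 2*(‖f x‖^2*(a*bz x).re))/s^2 := by
      funext x; rw [hn2 x]; ring
    rw [e1, integral_div, integral_sub (hint2.mul_const _) (hintre.const_mul 2),
      integral_mul_const, integral_const_mul, hIf, hre_int, hacre]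
    rw [← hs2]
    field_simp
    ring
  -- eLpNorms
  have hcont1 : Continuous fun x : 𝕋 => G₁ (bz x) := hG₁diff.continuous.comp continuous_bz
  have hcont2 : Continuous fun x : 𝕋 => G₂ (bz x) := hG₂diff.continuous.comp continuous_bz
  have hm1 : AEStronglyMeasurable f₁ m := hfm.mul hcont1.aestronglyMeasurable
  have hm2 : AEStronglyMeasurable f₂ m := hfm.mul hcont2.aestronglyMeasurable
  have hLp1 : MemLp f₁ 2 m := by
    refine MemLp.of_le_mul (c := (1+‖a‖)/s) hf2 hm1 (Eventually.of_forall fun x => ?_)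
    rw [hf₁def]
    simp only
    rw [norm_mul, mul_comm]
    exact mul_le_mul_of_nonneg_right (hG₁bd (bz x) (le_of_eq (norm_bz x))) (norm_nonneg _)
  have hLp2 : MemLp f₂ 2 m := by
    refine MemLp.of_le_mul (c := (1+‖a‖)/s) hf2 hm2 (Eventually.of_forall fun x => ?_)
    rw [hf₂def]
    simp only
    rw [norm_mul, mul_comm]
    exact mul_le_mul_of_nonneg_right (hG₂bd (bz x) (le_of_eq (norm_bz x))) (norm_nonneg _)
  have hen1 : eLpNorm f₁ 2 m = 1 := by
    rw [hLp1.eLpNorm_eq_integral_rpow_norm (by norm_num) (by norm_num), htR]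
    simp_rw [Real.rpow_natCast]
    rw [hI1]
    simp
  have hen2 : eLpNorm f₂ 2 m = 1 := by
    rw [hLp2.eLpNorm_eq_integral_rpow_norm (by norm_num) (by norm_num), htR]
    simp_rw [Real.rpow_natCast]
    rw [hI2]
    simp
  -- average identity
  have havg : ∀ x, ‖f x‖^2 = (‖f₁ x‖^2 + ‖f₂ x‖^2)/2 := by
    intro x
    rw [hn1 x, hn2 x, hs2]
    have hs2' : (1:ℝ) + ‖a‖^2 ≠ 0 := by positivity
    field_simp
    ring
  -- positive measure of difference
  have hBnull : m {x | (a * bz x).re = 0} = 0 :=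
    ((re_zero_finite ha0).countable).measure_zero m
  have hA : 0 < m {x | f x ≠ 0} := by
    by_contra h
    push_neg at h
    have hA0 : m {x | f x ≠ 0} = 0 := le_antisymm (by exact le_of_not_gt (by simpa using h)) (zero_le)
    have hz : f =ᵐ[m] 0 := by
      rw [Filter.EventuallyEq, ae_iff]
      simpa using hA0
    rw [eLpNorm_congr_ae hz, eLpNorm_zero] at hnorm
    exact one_ne_zero hnorm.symm
  have hsub : {x | f x ≠ 0} \ {x | (a * bz x).re = 0} ⊆ {x | ‖f₁ x‖ ≠ ‖f₂ x‖} := by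
    rintro x ⟨hxA, hxB⟩ heq
    apply hxB
    have h2 : ‖f₁ x‖^2 = ‖f₂ x‖^2 := by rw [heq]
    rw [hn1 x, hn2 x] at h2
    have hf0 : (0:ℝ) < ‖f x‖^2 := pow_pos (norm_pos_iff.mpr hxA) 2
    have h6 := mul_left_cancel₀ (ne_of_gt hf0) h2
    show (a * bz x).re = 0
    set rr := (a * bz x).re with hrr
    have hs2' : (0:ℝ) < s^2 := by positivity
    rw [div_eq_div_iff hs2'.ne' hs2'.ne'] at h6
    have h7 : (4*rr) * s^2 = 0 := by linear_combination h6
    rcases mul_eq_zero.1 h7 with h8 | h8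
    · linarith
    · exact absurd h8 hs2'.ne'
  have hdiff : m ({x | f x ≠ 0} \ {x | (a * bz x).re = 0}) = m {x | f x ≠ 0} :=
    measure_diff_null hBnull
  refine ⟨f₁, f₂, hHp1, hHp2, hen1, hen2, Eventually.of_forall havg, ?_⟩
  calc (0:ℝ≥0∞) < m {x | f x ≠ 0} := hA
    _ = m ({x | f x ≠ 0} \ {x | (a * bz x).re = 0}) := hdiff.symm
    _ ≤ m {x | ‖f₁ x‖ ≠ ‖f₂ x‖} := measure_mono hsub
end
end

section
/- Let 1 ≤ p ≤ ∞, let φ ∈ L^∞(T) be non-null with K_p(φ) ≠ {0}, and let g ≥ 0 be a function in L^{p/2}(T). If there exists f ∈ K_p(φ) with |f|² = g a.e. on T, then the function conj(z φ)·g belongs to H^{p/2}(T). -/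
open MeasureTheory Complex Filter Set Metric
open scoped Real ENNReal ComplexConjugate

noncomputable section

/-- auxiliary continuity lemma -/
-- auxiliary
lemma cont_circ (F : ℂ → ℂ) (hF : DifferentiableOn ℂ F (ball (0:ℂ) 1))
    (r : ℝ) (hr : r ∈ Ico (0:ℝ) 1) : Continuous fun x : 𝕋 => F ((r : ℂ) * bz x) := by
  apply hF.continuousOn.comp_continuous
  · exact continuous_const.mul (map_continuous (fourier 1))
  · intro x
    simp only [mem_ball, dist_zero_right, norm_mul]
    rw [show ‖bz x‖ = 1 from Circle.norm_coe _]
    calc ‖(r:ℂ)‖ * 1 = |r| := by simp [Complex.norm_real]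
    _ = r := abs_of_nonneg hr.1
    _ < 1 := hr.2

/-- If `g = |f|²` a.e. for some `f ∈ K_p(φ)`, then
`conj (z φ) · g ∈ H^{p/2}`. -/
theorem stmt5 (p : ℝ≥0∞) (hp : 1 ≤ p) (φ : 𝕋 → ℂ) (hφ : MemLp φ ∞ m)
    (hφ0 : ¬ φ =ᵐ[m] 0)
    (hker : ∃ f : 𝕋 → ℂ, MemKp p φ f ∧ ¬ f =ᵐ[m] 0)
    (g : 𝕋 → ℝ) (hg : MemLp g (p/2) m) (hgpos : ∀ᵐ x ∂m, 0 ≤ g x)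
    (hex : ∃ f : 𝕋 → ℂ, MemKp p φ f ∧ ∀ᵐ x ∂m, ‖f x‖ ^ 2 = g x) :
    MemHp (p/2) (fun x => conj (bz x * φ x) * (g x : ℂ)) := by
  obtain ⟨f, ⟨⟨F, hF, hbF⟩, ⟨G, hG, hbG⟩⟩, hfg⟩ := hex
  refine ⟨fun ζ => F ζ * G ζ, ⟨hF.1.mul hG.1, ?_⟩, ?_⟩
  · by_cases hptop : p = ∞
    · have h2 : p / 2 = ∞ := by simp [hptop, ENNReal.div_eq_top]
      rw [if_pos h2]
      have hF2 := hF.2; rw [if_pos hptop] at hF2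
      have hG2 := hG.2; rw [if_pos hptop] at hG2
      obtain ⟨C₁, hC₁⟩ := hF2
      obtain ⟨C₂, hC₂⟩ := hG2
      refine ⟨C₁ * C₂, fun w hw => ?_⟩
      rw [norm_mul]
      exact mul_le_mul (hC₁ w hw) (hC₂ w hw) (norm_nonneg _)
        ((norm_nonneg (F 0)).trans (hC₁ 0 (by simp)))
    · have h2 : p / 2 ≠ ∞ := by simp [ENNReal.div_eq_top, hptop]
      rw [if_neg h2]
      have hF2 := hF.2; rw [if_neg hptop] at hF2
      have hG2 := hG.2; rw [if_neg hptop] at hG2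
      obtain ⟨C₁, hC₁⟩ := hF2
      obtain ⟨C₂, hC₂⟩ := hG2
      refine ⟨(C₁ + C₂) / 2, fun r hr => ?_⟩
      have hq : (p/2).toReal = p.toReal / 2 := by rw [ENNReal.toReal_div]; norm_num
      have hpt : (0:ℝ) < p.toReal :=
        ENNReal.toReal_pos (by rintro rfl; simp at hp) hptop
      have hq0 : (0:ℝ) < (p/2).toReal := by rw [hq]; positivity
      -- integrability of the dominating functions
      have hiF : Integrable (fun x : 𝕋 => ‖F ((r:ℂ) * bz x)‖ ^ p.toReal) m :=
        ((cont_circ F hF.1 r hr).norm.rpow_const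
          (fun x => Or.inr hpt.le)).continuousOn.integrableOn_compact
          isCompact_univ |> integrableOn_univ.mp
      have hiG : Integrable (fun x : 𝕋 => ‖G ((r:ℂ) * bz x)‖ ^ p.toReal) m :=
        ((cont_circ G hG.1 r hr).norm.rpow_const
          (fun x => Or.inr hpt.le)).continuousOn.integrableOn_compact
          isCompact_univ |> integrableOn_univ.mp
      have key : ∀ x : 𝕋, ‖F ((r:ℂ) * bz x) * G ((r:ℂ) * bz x)‖ ^ (p/2).toReal ≤
          (‖F ((r:ℂ) * bz x)‖ ^ p.toReal + ‖G ((r:ℂ) * bz x)‖ ^ p.toReal) / 2 := by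
        intro x
        set a := ‖F ((r:ℂ) * bz x)‖
        set b := ‖G ((r:ℂ) * bz x)‖
        have ha : 0 ≤ a := norm_nonneg _
        have hb : 0 ≤ b := norm_nonneg _
        rw [norm_mul, Real.mul_rpow ha hb]
        have h1 : a ^ (p/2).toReal * b ^ (p/2).toReal ≤
            ((a ^ (p/2).toReal) ^ 2 + (b ^ (p/2).toReal) ^ 2) / 2 := by
          nlinarith [sq_nonneg (a ^ (p/2).toReal - b ^ (p/2).toReal)]
        have e : ∀ c : ℝ, 0 ≤ c → (c ^ (p/2).toReal) ^ 2 = c ^ p.toReal := by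
          intro c hc
          rw [← Real.rpow_natCast (c ^ (p/2).toReal) 2, ← Real.rpow_mul hc]
          norm_num [hq]
        rw [e a ha, e b hb] at h1
        exact h1
      calc (∫ x : 𝕋, ‖F ((r:ℂ) * bz x) * G ((r:ℂ) * bz x)‖ ^ (p/2).toReal ∂m)
          ≤ ∫ x : 𝕋, (‖F ((r:ℂ) * bz x)‖ ^ p.toReal + ‖G ((r:ℂ) * bz x)‖ ^ p.toReal) / 2 ∂m := by
            refine integral_mono_of_nonneg ?_ ((hiF.add hiG).div_const 2) ?_
            · exact Eventually.of_forall fun x => Real.rpow_nonneg (norm_nonneg _) _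
            · exact Eventually.of_forall key
        _ = ((∫ x : 𝕋, ‖F ((r:ℂ) * bz x)‖ ^ p.toReal ∂m) +
             (∫ x : 𝕋, ‖G ((r:ℂ) * bz x)‖ ^ p.toReal ∂m)) / 2 := by
            rw [integral_div, integral_add hiF hiG]
        _ ≤ (C₁ + C₂) / 2 := by
            have h1 := hC₁ r hr; have h2 := hC₂ r hr; linarith
  · filter_upwards [hbF, hbG, hfg] with x h1 h2 h3
    have h4 : f x * conj (bz x * φ x * f x) = conj (bz x * φ x) * (g x : ℂ) := by
      rw [← h3]
      push_cast
      simp only [map_mul]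
      rw [show ((‖f x‖:ℂ))^2 = f x * conj (f x) by
        rw [Complex.mul_conj]; push_cast [Complex.normSq_eq_norm_sq]; rfl]
      ring
    exact h4 ▸ h1.mul h2
end
end
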